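/- arXiv:q-alg/9712029 — 2 statements merged into one kernel-verified Lean document; each statement's English description precedes it below -/
import Mathlib

section
/- If F is a cocycle twistor and R a universal R-matrix for A, then R_F = F^{(21)} R F^{-1} is a universal R-matrix for the twisted bialgebra (A, Δ_F, ε): σ(Δ_F(a)) = R_F Δ_F(a) R_F^{-1} for all a ∈ A, (Δ_F ⊗ id)(R_F) = R_F^{(13)} R_F^{(23)}, and (id ⊗ Δ_F)(R_F) = R_F^{(13)} R_F^{(12)}; in particular R_F satisfies the Yang–Baxter equation R_F^{(12)} R_F^{(13)} R_F^{(23)} = R_F^{(23)} R_F^{(13)} R_F^{(12)}. -/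
open scoped TensorProduct

noncomputable section

variable (k A : Type*) [CommRing k] [Ring A] [Bialgebra k A]

/-- `x ⊗ y ↦ x ⊗ y ⊗ 1`. -/
def leg12 : A ⊗[k] A →ₐ[k] A ⊗[k] (A ⊗[k] A) :=
  Algebra.TensorProduct.map (AlgHom.id k A) Algebra.TensorProduct.includeLeft

/-- `x ⊗ y ↦ 1 ⊗ x ⊗ y`. -/
def leg23 : A ⊗[k] A →ₐ[k] A ⊗[k] (A ⊗[k] A) :=
  Algebra.TensorProduct.includeRight

/-- `Δ ⊗ id : A ⊗ A → A ⊗ A ⊗ A`. -/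
def comulLeft : A ⊗[k] A →ₐ[k] A ⊗[k] (A ⊗[k] A) :=
  (Algebra.TensorProduct.assoc k k k A A A).toAlgHom.comp
    (Algebra.TensorProduct.map (Bialgebra.comulAlgHom k A) (AlgHom.id k A))

/-- `id ⊗ Δ : A ⊗ A → A ⊗ A ⊗ A`. -/
def comulRight : A ⊗[k] A →ₐ[k] A ⊗[k] (A ⊗[k] A) :=
  Algebra.TensorProduct.map (AlgHom.id k A) (Bialgebra.comulAlgHom k A)

/-- `ε ⊗ id : A ⊗ A → A`. -/
def counitLeft : A ⊗[k] A →ₐ[k] A :=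
  (Algebra.TensorProduct.lid k A).toAlgHom.comp
    (Algebra.TensorProduct.map (Bialgebra.counitAlgHom k A) (AlgHom.id k A))

/-- `id ⊗ ε : A ⊗ A → A`. -/
def counitRight : A ⊗[k] A →ₐ[k] A :=
  (Algebra.TensorProduct.rid k k A).toAlgHom.comp
    (Algebra.TensorProduct.map (AlgHom.id k A) (Bialgebra.counitAlgHom k A))

/-- The induced map on units of an algebra homomorphism. -/
def uMap {B C : Type*} [Ring B] [Ring C] [Algebra k B] [Algebra k C]
    (f : B →ₐ[k] C) : Bˣ →* Cˣ :=
  Units.map f.toRingHom.toMonoidHom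

variable {k A}

/-- The twisted comultiplication `Δ_F(a) = F Δ(a) F⁻¹`. -/
def twistComul (F : (A ⊗[k] A)ˣ) (a : A) : A ⊗[k] A :=
  Units.val F * Bialgebra.comulAlgHom k A a * Units.val F⁻¹

/-- The twisted coassociator `Φ_F`, as a unit in `A ⊗ A ⊗ A`. -/
def twistAssoc (F : (A ⊗[k] A)ˣ) : (A ⊗[k] (A ⊗[k] A))ˣ :=
  (uMap k (leg23 k A) F * uMap k (comulRight k A) F) *
    (uMap k (leg12 k A) F * uMap k (comulLeft k A) F)⁻¹

/-- `(Δ_F ⊗ id)(X) = F^{(12)} (Δ ⊗ id)(X) F^{(12)⁻¹}` on `A ⊗ A`. -/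
def twistComulLeft (F : (A ⊗[k] A)ˣ) (X : A ⊗[k] A) : A ⊗[k] (A ⊗[k] A) :=
  Units.val (uMap k (leg12 k A) F) * comulLeft k A X *
    Units.val (uMap k (leg12 k A) F)⁻¹

/-- `(id ⊗ Δ_F)(X) = F^{(23)} (id ⊗ Δ)(X) F^{(23)⁻¹}` on `A ⊗ A`. -/
def twistComulRight (F : (A ⊗[k] A)ˣ) (X : A ⊗[k] A) : A ⊗[k] (A ⊗[k] A) :=
  Units.val (uMap k (leg23 k A) F) * comulRight k A X *
    Units.val (uMap k (leg23 k A) F)⁻¹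

variable (k A)

/-- `x ⊗ y ↦ x ⊗ 1 ⊗ y`. -/
def leg13 : A ⊗[k] A →ₐ[k] A ⊗[k] (A ⊗[k] A) :=
  Algebra.TensorProduct.map (AlgHom.id k A) Algebra.TensorProduct.includeRight

/-- the flip `σ : A ⊗ A → A ⊗ A`. -/
def flipT : A ⊗[k] A →ₐ[k] A ⊗[k] A :=
  (Algebra.TensorProduct.comm k A A).toAlgHom

variable {k A}

/-- The twisted R-matrix `R_F = F^{(21)} R F⁻¹`, as a unit in `A ⊗ A`. -/
def twistR (R F : (A ⊗[k] A)ˣ) : (A ⊗[k] A)ˣ :=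
  uMap k (flipT k A) F * R * F⁻¹

section
def w23 : A ⊗[k] (A ⊗[k] A) →ₐ[k] A ⊗[k] (A ⊗[k] A) :=
  (Algebra.TensorProduct.congr AlgEquiv.refl (Algebra.TensorProduct.comm k A A)).toAlgHom
def w12 : A ⊗[k] (A ⊗[k] A) →ₐ[k] A ⊗[k] (A ⊗[k] A) :=
  ((Algebra.TensorProduct.assoc k k k A A A).toAlgHom.comp
    ((Algebra.TensorProduct.congr (Algebra.TensorProduct.comm k A A) AlgEquiv.refl).toAlgHom.comp
      (Algebra.TensorProduct.assoc k k k A A A).symm.toAlgHom))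

@[simp] lemma w23_tmul (x y z : A) : w23 (x ⊗ₜ[k] (y ⊗ₜ[k] z)) = x ⊗ₜ (z ⊗ₜ y) := by simp [w23]
@[simp] lemma w12_tmul (x y z : A) : w12 (x ⊗ₜ[k] (y ⊗ₜ[k] z)) = y ⊗ₜ (x ⊗ₜ z) := by simp [w12]
@[simp] lemma leg12_tmul (x y : A) : leg12 k A (x ⊗ₜ[k] y) = x ⊗ₜ (y ⊗ₜ (1:A)) := rfl
@[simp] lemma leg23_tmul (x y : A) : leg23 k A (x ⊗ₜ[k] y) = (1:A) ⊗ₜ (x ⊗ₜ y) := rfl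
@[simp] lemma leg23_apply (Z : A ⊗[k] A) : leg23 k A Z = (1:A) ⊗ₜ Z := rfl
@[simp] lemma leg13_tmul (x y : A) : leg13 k A (x ⊗ₜ[k] y) = x ⊗ₜ ((1:A) ⊗ₜ y) := rfl
@[simp] lemma flipT_tmul (x y : A) : flipT k A (x ⊗ₜ[k] y) = y ⊗ₜ x := rfl
@[simp] lemma comulRight_tmul (x y : A) :
    comulRight k A (x ⊗ₜ[k] y) = x ⊗ₜ (Bialgebra.comulAlgHom k A y) := rfl
end

section
lemma tmul_left_decomp (Z : A ⊗[k] A) (y : A) :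
    (Algebra.TensorProduct.assoc k k k A A A) (Z ⊗ₜ[k] y) =
      leg12 k A Z * ((1:A) ⊗ₜ[k] ((1:A) ⊗ₜ[k] y)) := by
  induction Z using TensorProduct.induction_on with
  | zero => simp
  | tmul a b => simp [Algebra.TensorProduct.tmul_mul_tmul]
  | add u v hu hv => simp only [TensorProduct.add_tmul, map_add, hu, hv, add_mul]

lemma comulLeft_tmul (x y : A) :
    comulLeft k A (x ⊗ₜ[k] y) =
      leg12 k A (Bialgebra.comulAlgHom k A x) * ((1:A) ⊗ₜ[k] ((1:A) ⊗ₜ[k] y)) := by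
  simp [comulLeft, tmul_left_decomp]

lemma comulRight_decomp (x y : A) :
    comulRight k A (x ⊗ₜ[k] y) =
      (x ⊗ₜ[k] (1 : A ⊗[k] A)) * leg23 k A (Bialgebra.comulAlgHom k A y) := by
  simp [Algebra.TensorProduct.tmul_mul_tmul]

lemma leg12_comm (Z : A ⊗[k] A) (y : A) :
    leg12 k A Z * ((1:A) ⊗ₜ[k] ((1:A) ⊗ₜ[k] y)) =
      ((1:A) ⊗ₜ[k] ((1:A) ⊗ₜ[k] y)) * leg12 k A Z := by
  induction Z using TensorProduct.induction_on with
  | zero => simp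
  | tmul a b => simp [Algebra.TensorProduct.tmul_mul_tmul]
  | add u v hu hv => simp only [map_add, add_mul, mul_add, hu, hv]

lemma leg23_comm (Z : A ⊗[k] A) (x : A) :
    (x ⊗ₜ[k] (1 : A ⊗[k] A)) * leg23 k A Z = leg23 k A Z * (x ⊗ₜ[k] (1 : A ⊗[k] A)) := by
  simp [Algebra.TensorProduct.tmul_mul_tmul]

lemma leg13_comm (Z : A ⊗[k] A) (y : A) :
    leg13 k A Z * ((1:A) ⊗ₜ[k] (y ⊗ₜ[k] (1:A))) =
      ((1:A) ⊗ₜ[k] (y ⊗ₜ[k] (1:A))) * leg13 k A Z := by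
  induction Z using TensorProduct.induction_on with
  | zero => simp
  | tmul a b => simp [Algebra.TensorProduct.tmul_mul_tmul]
  | add u v hu hv => simp only [map_add, add_mul, mul_add, hu, hv]
end

section
lemma pw12_l12 (Z : A ⊗[k] A) : w12 (leg12 k A Z) = leg12 k A (flipT k A Z) := by
  induction Z using TensorProduct.induction_on with
  | zero => simp
  | tmul a b => simp
  | add u v hu hv => simp only [map_add, hu, hv]

lemma pw12_l23 (Z : A ⊗[k] A) : w12 (leg23 k A Z) = leg13 k A Z := by
  induction Z using TensorProduct.induction_on with
  | zero => simp
  | tmul a b => simp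
  | add u v hu hv => simp only [map_add, hu, hv]

lemma pw12_l13 (Z : A ⊗[k] A) : w12 (leg13 k A Z) = leg23 k A Z := by
  induction Z using TensorProduct.induction_on with
  | zero => simp
  | tmul a b => simp
  | add u v hu hv => simp only [map_add, hu, hv]

lemma pw23_l12 (Z : A ⊗[k] A) : w23 (leg12 k A Z) = leg13 k A Z := by
  induction Z using TensorProduct.induction_on with
  | zero => simp
  | tmul a b => simp
  | add u v hu hv => simp only [map_add, hu, hv]

lemma pw23_l23 (Z : A ⊗[k] A) : w23 (leg23 k A Z) = leg23 k A (flipT k A Z) := by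
  induction Z using TensorProduct.induction_on with
  | zero => simp
  | tmul a b => simp
  | add u v hu hv => simp only [map_add, hu, hv]

lemma pw23_l13 (Z : A ⊗[k] A) : w23 (leg13 k A Z) = leg12 k A Z := by
  induction Z using TensorProduct.induction_on with
  | zero => simp
  | tmul a b => simp
  | add u v hu hv => simp only [map_add, hu, hv]

/-- `q ∘ (id⊗Δ) = (Δ⊗id) ∘ σ`. -/
lemma pq_dr (X : A ⊗[k] A) :
    w23 (w12 (comulRight k A X)) = comulLeft k A (flipT k A X) := by
  induction X using TensorProduct.induction_on with
  | zero => simp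
  | tmul x y =>
    rw [comulRight_decomp, map_mul, map_mul, pw12_l23, pw23_l13]
    have : w23 (w12 (x ⊗ₜ[k] (1 : A ⊗[k] A))) = (1:A) ⊗ₜ[k] ((1:A) ⊗ₜ[k] x) := by
      rw [Algebra.TensorProduct.one_def]; simp
    rw [this, flipT_tmul, comulLeft_tmul, ← leg12_comm]
  | add u v hu hv => simp only [map_add, hu, hv]

/-- `r ∘ (Δ⊗id) = (id⊗Δ) ∘ σ`. -/
lemma pr_dl (X : A ⊗[k] A) :
    w12 (w23 (comulLeft k A X)) = comulRight k A (flipT k A X) := by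
  induction X using TensorProduct.induction_on with
  | zero => simp
  | tmul x y =>
    rw [comulLeft_tmul, map_mul, map_mul, pw23_l12, pw12_l13]
    have : w12 (w23 ((1:A) ⊗ₜ[k] ((1:A) ⊗ₜ[k] y))) = y ⊗ₜ[k] (1 : A ⊗[k] A) := by
      rw [Algebra.TensorProduct.one_def]; simp
    rw [this, flipT_tmul, comulRight_decomp, leg23_comm]
  | add u v hu hv => simp only [map_add, hu, hv]
end

section
variable (R : (A ⊗[k] A)ˣ)

lemma K12 (h : ∀ a : A, flipT k A (Bialgebra.comulAlgHom k A a) * ↑R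
      = ↑R * Bialgebra.comulAlgHom k A a) (X : A ⊗[k] A) :
    w12 (comulLeft k A X) * leg12 k A ↑R = leg12 k A ↑R * comulLeft k A X := by
  induction X using TensorProduct.induction_on with
  | zero => simp
  | tmul x y =>
    have hw : w12 ((1:A) ⊗ₜ[k] ((1:A) ⊗ₜ[k] y)) = (1:A) ⊗ₜ[k] ((1:A) ⊗ₜ[k] y) := by simp
    conv_lhs => rw [comulLeft_tmul, map_mul, pw12_l12, hw, mul_assoc,
      ← leg12_comm (↑R : A ⊗[k] A) y, ← mul_assoc, ← map_mul, h x, map_mul, mul_assoc]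
    conv_rhs => rw [comulLeft_tmul, ← mul_assoc, mul_assoc]
  | add u v hu hv => simp only [map_add, add_mul, mul_add, hu, hv]

lemma K23 (h : ∀ a : A, flipT k A (Bialgebra.comulAlgHom k A a) * ↑R
      = ↑R * Bialgebra.comulAlgHom k A a) (X : A ⊗[k] A) :
    w23 (comulRight k A X) * leg23 k A ↑R = leg23 k A ↑R * comulRight k A X := by
  induction X using TensorProduct.induction_on with
  | zero => simp
  | tmul x y =>
    have hw : w23 (x ⊗ₜ[k] (1 : A ⊗[k] A)) = x ⊗ₜ[k] (1 : A ⊗[k] A) := by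
      rw [Algebra.TensorProduct.one_def]; simp [Algebra.TensorProduct.one_def]
    conv_lhs => rw [comulRight_decomp, map_mul, pw23_l23, hw, mul_assoc,
      ← map_mul, h y, map_mul, ← mul_assoc, leg23_comm, mul_assoc]
    conv_rhs => rw [comulRight_decomp, ← mul_assoc, mul_assoc]
  | add u v hu hv => simp only [map_add, add_mul, mul_add, hu, hv]

lemma K13a (h : ∀ a : A, flipT k A (Bialgebra.comulAlgHom k A a) * ↑R
      = ↑R * Bialgebra.comulAlgHom k A a) (X : A ⊗[k] A) :
    w23 (w12 (comulLeft k A X)) * leg13 k A ↑R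
      = leg13 k A ↑R * w23 (comulLeft k A X) := by
  induction X using TensorProduct.induction_on with
  | zero => simp
  | tmul x y =>
    have hw : w23 (w12 ((1:A) ⊗ₜ[k] ((1:A) ⊗ₜ[k] y))) = (1:A) ⊗ₜ[k] (y ⊗ₜ[k] (1:A)) := by
      simp
    have hw2 : w23 ((1:A) ⊗ₜ[k] ((1:A) ⊗ₜ[k] y)) = (1:A) ⊗ₜ[k] (y ⊗ₜ[k] (1:A)) := by simp
    conv_lhs => rw [comulLeft_tmul, map_mul, map_mul, pw12_l12, pw23_l12, hw, mul_assoc,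
      ← leg13_comm (↑R : A ⊗[k] A) y, ← mul_assoc, ← map_mul, h x, map_mul, mul_assoc]
    conv_rhs => rw [comulLeft_tmul, map_mul, pw23_l12, hw2]
  | add u v hu hv => simp only [map_add, add_mul, mul_add, hu, hv]

lemma K13b (h : ∀ a : A, flipT k A (Bialgebra.comulAlgHom k A a) * ↑R
      = ↑R * Bialgebra.comulAlgHom k A a) (X : A ⊗[k] A) :
    w12 (w23 (comulRight k A X)) * leg13 k A ↑R
      = leg13 k A ↑R * w12 (comulRight k A X) := by
  induction X using TensorProduct.induction_on with
  | zero => simp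
  | tmul x y =>
    have hw : w23 (x ⊗ₜ[k] (1 : A ⊗[k] A)) = x ⊗ₜ[k] (1 : A ⊗[k] A) := by
      rw [Algebra.TensorProduct.one_def]; simp [Algebra.TensorProduct.one_def]
    have hw2 : w12 (x ⊗ₜ[k] (1 : A ⊗[k] A)) = (1:A) ⊗ₜ[k] (x ⊗ₜ[k] (1:A)) := by
      rw [Algebra.TensorProduct.one_def]; simp
    conv_lhs => rw [comulRight_decomp, map_mul, pw23_l23, hw, map_mul, hw2, pw12_l23,
      mul_assoc, ← map_mul, h y, map_mul, ← mul_assoc, ← leg13_comm _ x, mul_assoc]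
    conv_rhs => rw [comulRight_decomp, map_mul, hw2, pw12_l23]
  | add u v hu hv => simp only [map_add, add_mul, mul_add, hu, hv]
end

section
@[simp] lemma uMap_val {B C : Type*} [Ring B] [Ring C] [Algebra k B] [Algebra k C]
    (f : B →ₐ[k] C) (u : Bˣ) : ((uMap k f u : Cˣ) : C) = f ↑u := rfl
@[simp] lemma uMap_inv_val {B C : Type*} [Ring B] [Ring C] [Algebra k B] [Algebra k C]
    (f : B →ₐ[k] C) (u : Bˣ) : (((uMap k f u)⁻¹ : Cˣ) : C) = f ↑u⁻¹ := rfl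

lemma K12F (F Rf : (A ⊗[k] A)ˣ)
    (h : ∀ a : A, flipT k A (↑F * Bialgebra.comulAlgHom k A a * ↑F⁻¹) * ↑Rf
        = ↑Rf * (↑F * Bialgebra.comulAlgHom k A a * ↑F⁻¹)) (X : A ⊗[k] A) :
    w12 (leg12 k A ↑F * comulLeft k A X * leg12 k A ↑F⁻¹) * leg12 k A ↑Rf
      = leg12 k A ↑Rf * (leg12 k A ↑F * comulLeft k A X * leg12 k A ↑F⁻¹) := by
  induction X using TensorProduct.induction_on with
  | zero => simp
  | tmul x y =>
    have hw : w12 ((1:A) ⊗ₜ[k] ((1:A) ⊗ₜ[k] y)) = (1:A) ⊗ₜ[k] ((1:A) ⊗ₜ[k] y) := by simp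
    have hd : leg12 k A ↑F * comulLeft k A (x ⊗ₜ[k] y) * leg12 k A ↑F⁻¹
        = leg12 k A (↑F * Bialgebra.comulAlgHom k A x * ↑F⁻¹)
            * ((1:A) ⊗ₜ[k] ((1:A) ⊗ₜ[k] y)) := by
      rw [comulLeft_tmul,
        ← mul_assoc (leg12 k A ↑F) (leg12 k A (Bialgebra.comulAlgHom k A x)) _,
        mul_assoc (leg12 k A ↑F * leg12 k A (Bialgebra.comulAlgHom k A x)) _ _,
        ← leg12_comm ((↑F⁻¹ : A ⊗[k] A)) y, ← mul_assoc, map_mul, map_mul]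
    rw [hd, map_mul, pw12_l12, hw, mul_assoc, ← leg12_comm ((↑Rf : A ⊗[k] A)) y,
      ← mul_assoc, ← map_mul, h x, map_mul, mul_assoc]
  | add u v hu hv => simp only [map_add, add_mul, mul_add, hu, hv]
end

section GroupCalc
variable {G : Type*} [Group G]

lemma lift_mul {a b c d : G} (h : a * b = c * d) (t : G) :
    a * (b * t) = c * (d * t) := by rw [← mul_assoc, h, mul_assoc]

lemma mainU2 (F12 F13 F23 F31 F32 G1 G2 G1s qG1 wG1 wG2 R13 R23 : G)
    (Hc : F12 * G1 = F23 * G2)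
    (E1 : F31 * qG1 = F12 * G1s)
    (E2 : F13 * wG1 = F32 * wG2)
    (c13 : qG1 * R13 = R13 * wG1)
    (c23 : wG2 * R23 = R23 * G2) :
    F12 * (G1s * (R13 * R23) * G1⁻¹) * F12⁻¹
      = F31 * R13 * F13⁻¹ * (F32 * R23 * F23⁻¹) := by
  have hcInv : G1⁻¹ * F12⁻¹ = G2⁻¹ * F23⁻¹ := by
    rw [← mul_inv_rev, ← mul_inv_rev, Hc]
  have c23' : R23 * G2⁻¹ = wG2⁻¹ * R23 := by
    have h0 := congrArg (fun z => wG2⁻¹ * z * G2⁻¹) c23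
    simpa [mul_assoc] using h0
  have e2' : wG1 * wG2⁻¹ = F13⁻¹ * F32 := by
    have h0 := congrArg (fun z => F13⁻¹ * z * wG2⁻¹) E2
    simpa [mul_assoc] using h0
  simp only [mul_assoc]
  rw [hcInv, lift_mul E1.symm, lift_mul c13, lift_mul c23', lift_mul e2']

lemma mainU3 (F12 F13 F21 F23 F31 G1 G2 G2s rG2 vG1 vG2 R12 R13 : G)
    (Hc : F12 * G1 = F23 * G2)
    (E3 : F21 * vG1 = F13 * vG2)
    (E4 : F23 * G2s = F31 * rG2)
    (c12 : vG1 * R12 = R12 * G1)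
    (c13b : rG2 * R13 = R13 * vG2) :
    F23 * (G2s * (R13 * R12) * G2⁻¹) * F23⁻¹
      = F31 * R13 * F13⁻¹ * (F21 * R12 * F12⁻¹) := by
  have e3' : vG2 = F13⁻¹ * (F21 * vG1) := by
    have h0 := congrArg (fun z => F13⁻¹ * z) E3
    simpa [mul_assoc] using h0.symm
  have hc2 : G1 * G2⁻¹ = F12⁻¹ * F23 := by
    have h0 := congrArg (fun z => F12⁻¹ * z * G2⁻¹) Hc
    simpa [mul_assoc] using h0
  simp only [mul_assoc]
  rw [lift_mul E4, lift_mul c13b, e3']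
  simp only [mul_assoc]
  rw [lift_mul c12, lift_mul hc2]
  simp only [mul_inv_cancel, mul_one]
end GroupCalc

section UnitLemmas

lemma uw12_l12 (u : (A ⊗[k] A)ˣ) :
    uMap k w12 (uMap k (leg12 k A) u) = uMap k (leg12 k A) (uMap k (flipT k A) u) :=
  by
  apply Units.ext
  simp only [uMap_val]
  exact pw12_l12 _

lemma uw12_l23 (u : (A ⊗[k] A)ˣ) :
    uMap k w12 (uMap k (leg23 k A) u) = uMap k (leg13 k A) u :=
  by
  apply Units.ext
  simp only [uMap_val]
  exact pw12_l23 _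

lemma uw12_l13 (u : (A ⊗[k] A)ˣ) :
    uMap k w12 (uMap k (leg13 k A) u) = uMap k (leg23 k A) u :=
  by
  apply Units.ext
  simp only [uMap_val]
  exact pw12_l13 _

lemma uw23_l12 (u : (A ⊗[k] A)ˣ) :
    uMap k w23 (uMap k (leg12 k A) u) = uMap k (leg13 k A) u :=
  by
  apply Units.ext
  simp only [uMap_val]
  exact pw23_l12 _

lemma uw23_l23 (u : (A ⊗[k] A)ˣ) :
    uMap k w23 (uMap k (leg23 k A) u) = uMap k (leg23 k A) (uMap k (flipT k A) u) :=
  by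
  apply Units.ext
  simp only [uMap_val]
  exact pw23_l23 _

lemma uw23_l13 (u : (A ⊗[k] A)ˣ) :
    uMap k w23 (uMap k (leg13 k A) u) = uMap k (leg12 k A) u :=
  by
  apply Units.ext
  simp only [uMap_val]
  exact pw23_l13 _

lemma uq_dr (u : (A ⊗[k] A)ˣ) :
    uMap k w23 (uMap k w12 (uMap k (comulRight k A) u))
      = uMap k (comulLeft k A) (uMap k (flipT k A) u) :=
  by
  apply Units.ext
  simp only [uMap_val]
  exact pq_dr _

lemma ur_dl (u : (A ⊗[k] A)ˣ) :
    uMap k w12 (uMap k w23 (uMap k (comulLeft k A) u))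
      = uMap k (comulRight k A) (uMap k (flipT k A) u) :=
  by
  apply Units.ext
  simp only [uMap_val]
  exact pr_dl _

lemma E3aux (F : (A ⊗[k] A)ˣ)
    (Hc : uMap k (leg12 k A) F * uMap k (comulLeft k A) F
        = uMap k (leg23 k A) F * uMap k (comulRight k A) F) :
    uMap k (leg12 k A) (uMap k (flipT k A) F) * uMap k w12 (uMap k (comulLeft k A) F)
      = uMap k (leg13 k A) F * uMap k w12 (uMap k (comulRight k A) F) := by
  have h0 := congrArg (uMap k w12) Hc
  simp only [map_mul] at h0
  rwa [uw12_l12, uw12_l23] at h0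

lemma E2aux (F : (A ⊗[k] A)ˣ)
    (Hc : uMap k (leg12 k A) F * uMap k (comulLeft k A) F
        = uMap k (leg23 k A) F * uMap k (comulRight k A) F) :
    uMap k (leg13 k A) F * uMap k w23 (uMap k (comulLeft k A) F)
      = uMap k (leg23 k A) (uMap k (flipT k A) F) * uMap k w23 (uMap k (comulRight k A) F) := by
  have h0 := congrArg (uMap k w23) Hc
  simp only [map_mul] at h0
  rwa [uw23_l12, uw23_l23] at h0

lemma E1aux (F : (A ⊗[k] A)ˣ)
    (E3 : uMap k (leg12 k A) (uMap k (flipT k A) F) * uMap k w12 (uMap k (comulLeft k A) F)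
        = uMap k (leg13 k A) F * uMap k w12 (uMap k (comulRight k A) F)) :
    uMap k (leg13 k A) (uMap k (flipT k A) F)
        * uMap k w23 (uMap k w12 (uMap k (comulLeft k A) F))
      = uMap k (leg12 k A) F * uMap k (comulLeft k A) (uMap k (flipT k A) F) := by
  have h0 := congrArg (uMap k w23) E3
  simp only [map_mul] at h0
  rwa [uw23_l12, uw23_l13, uq_dr] at h0

lemma E4aux (F : (A ⊗[k] A)ˣ)
    (E2 : uMap k (leg13 k A) F * uMap k w23 (uMap k (comulLeft k A) F)
        = uMap k (leg23 k A) (uMap k (flipT k A) F) * uMap k w23 (uMap k (comulRight k A) F)) :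
    uMap k (leg23 k A) F * uMap k (comulRight k A) (uMap k (flipT k A) F)
      = uMap k (leg13 k A) (uMap k (flipT k A) F)
          * uMap k w12 (uMap k w23 (uMap k (comulRight k A) F)) := by
  have h0 := congrArg (uMap k w12) E2
  simp only [map_mul] at h0
  rwa [uw12_l13, ur_dl, uw12_l23] at h0

end UnitLemmas

/-- If `F` is a cocycle twistor and `R` a universal R-matrix for `A`,
then `R_F = F^{(21)} R F⁻¹` is a universal R-matrix for the twisted bialgebra
`(A, Δ_F, ε)`; in particular `R_F` satisfies the Yang–Baxter equation. -/
theorem cocycle_twist_universal_R (R F : (A ⊗[k] A)ˣ)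
    (hR1 : ∀ a : A, flipT k A (Bialgebra.comulAlgHom k A a) =
      Units.val R * Bialgebra.comulAlgHom k A a * Units.val R⁻¹)
    (hR2 : comulLeft k A (Units.val R) =
      leg13 k A (Units.val R) * leg23 k A (Units.val R))
    (hR3 : comulRight k A (Units.val R) =
      leg13 k A (Units.val R) * leg12 k A (Units.val R))
    (hF1 : counitLeft k A (Units.val F) = 1)
    (hF2 : counitRight k A (Units.val F) = 1)
    (hcoc : Units.val (uMap k (leg12 k A) F) * comulLeft k A (Units.val F) =
      Units.val (uMap k (leg23 k A) F) * comulRight k A (Units.val F)) :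
    -- intertwining property
    (∀ a : A, flipT k A (twistComul F a) =
      Units.val (twistR R F) * twistComul F a * Units.val (twistR R F)⁻¹) ∧
    -- `(Δ_F ⊗ id)(R_F) = R_F^{(13)} R_F^{(23)}`
    twistComulLeft F (Units.val (twistR R F)) =
      leg13 k A (Units.val (twistR R F)) * leg23 k A (Units.val (twistR R F)) ∧
    -- `(id ⊗ Δ_F)(R_F) = R_F^{(13)} R_F^{(12)}`
    twistComulRight F (Units.val (twistR R F)) =
      leg13 k A (Units.val (twistR R F)) * leg12 k A (Units.val (twistR R F)) ∧
    -- the Yang–Baxter equation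
    leg12 k A (Units.val (twistR R F)) * leg13 k A (Units.val (twistR R F)) *
        leg23 k A (Units.val (twistR R F)) =
      leg23 k A (Units.val (twistR R F)) * leg13 k A (Units.val (twistR R F)) *
        leg12 k A (Units.val (twistR R F)) := by
  have hR1' : ∀ a : A, flipT k A (Bialgebra.comulAlgHom k A a) * ↑R
      = ↑R * Bialgebra.comulAlgHom k A a := fun a => by
    rw [hR1 a, Units.inv_mul_cancel_right]
  have Hc : uMap k (leg12 k A) F * uMap k (comulLeft k A) F
      = uMap k (leg23 k A) F * uMap k (comulRight k A) F := by
    apply Units.ext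
    simpa only [Units.val_mul, uMap_val] using hcoc
  have uR2 : uMap k (comulLeft k A) R
      = uMap k (leg13 k A) R * uMap k (leg23 k A) R := by
    apply Units.ext
    simpa only [Units.val_mul, uMap_val] using hR2
  have uR3 : uMap k (comulRight k A) R
      = uMap k (leg13 k A) R * uMap k (leg12 k A) R := by
    apply Units.ext
    simpa only [Units.val_mul, uMap_val] using hR3
  have E3 := E3aux F Hc
  have E2 := E2aux F Hc
  have E1 := E1aux F E3
  have E4 := E4aux F E2
  have c12 : uMap k w12 (uMap k (comulLeft k A) F) * uMap k (leg12 k A) R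
      = uMap k (leg12 k A) R * uMap k (comulLeft k A) F := by
    apply Units.ext
    simpa only [Units.val_mul, uMap_val] using K12 R hR1' ↑F
  have c23 : uMap k w23 (uMap k (comulRight k A) F) * uMap k (leg23 k A) R
      = uMap k (leg23 k A) R * uMap k (comulRight k A) F := by
    apply Units.ext
    simpa only [Units.val_mul, uMap_val] using K23 R hR1' ↑F
  have c13 : uMap k w23 (uMap k w12 (uMap k (comulLeft k A) F)) * uMap k (leg13 k A) R
      = uMap k (leg13 k A) R * uMap k w23 (uMap k (comulLeft k A) F) := by
    apply Units.ext
    simpa only [Units.val_mul, uMap_val] using K13a R hR1' ↑F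
  have c13b : uMap k w12 (uMap k w23 (uMap k (comulRight k A) F)) * uMap k (leg13 k A) R
      = uMap k (leg13 k A) R * uMap k w12 (uMap k (comulRight k A) F) := by
    apply Units.ext
    simpa only [Units.val_mul, uMap_val] using K13b R hR1' ↑F
  have uRf13 : uMap k (leg13 k A) (twistR R F)
      = uMap k (leg13 k A) (uMap k (flipT k A) F) * uMap k (leg13 k A) R
          * (uMap k (leg13 k A) F)⁻¹ := by
    simp only [twistR, map_mul, map_inv]
  have uRf12 : uMap k (leg12 k A) (twistR R F)
      = uMap k (leg12 k A) (uMap k (flipT k A) F) * uMap k (leg12 k A) R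
          * (uMap k (leg12 k A) F)⁻¹ := by
    simp only [twistR, map_mul, map_inv]
  have uRf23 : uMap k (leg23 k A) (twistR R F)
      = uMap k (leg23 k A) (uMap k (flipT k A) F) * uMap k (leg23 k A) R
          * (uMap k (leg23 k A) F)⁻¹ := by
    simp only [twistR, map_mul, map_inv]
  have uG1Rf : uMap k (comulLeft k A) (twistR R F)
      = uMap k (comulLeft k A) (uMap k (flipT k A) F)
          * (uMap k (leg13 k A) R * uMap k (leg23 k A) R)
          * (uMap k (comulLeft k A) F)⁻¹ := by
    simp only [twistR, map_mul, map_inv, uR2]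
  have uG2Rf : uMap k (comulRight k A) (twistR R F)
      = uMap k (comulRight k A) (uMap k (flipT k A) F)
          * (uMap k (leg13 k A) R * uMap k (leg12 k A) R)
          * (uMap k (comulRight k A) F)⁻¹ := by
    simp only [twistR, map_mul, map_inv, uR3]
  have U2 : uMap k (leg12 k A) F * uMap k (comulLeft k A) (twistR R F)
        * (uMap k (leg12 k A) F)⁻¹
      = uMap k (leg13 k A) (twistR R F) * uMap k (leg23 k A) (twistR R F) := by
    rw [uG1Rf, uRf13, uRf23]
    exact mainU2 _ _ _ _ _ _ _ _ _ _ _ _ _ Hc E1 E2 c13 c23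
  have U3 : uMap k (leg23 k A) F * uMap k (comulRight k A) (twistR R F)
        * (uMap k (leg23 k A) F)⁻¹
      = uMap k (leg13 k A) (twistR R F) * uMap k (leg12 k A) (twistR R F) := by
    rw [uG2Rf, uRf13, uRf12]
    exact mainU3 _ _ _ _ _ _ _ _ _ _ _ _ _ Hc E3 E4 c12 c13b
  have hG1' : ∀ a : A, flipT k A (twistComul F a) * ↑(twistR R F)
      = ↑(twistR R F) * twistComul F a := by
    intro a
    show flipT k A (Units.val F * Bialgebra.comulAlgHom k A a * Units.val F⁻¹)
        * ↑(twistR R F)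
      = ↑(twistR R F) * (Units.val F * Bialgebra.comulAlgHom k A a * Units.val F⁻¹)
    have hval : (↑(twistR R F) : A ⊗[k] A)
        = ↑(uMap k (flipT k A) F) * ↑R * ↑F⁻¹ := rfl
    have e1 : flipT k A (Units.val F) = ↑(uMap k (flipT k A) F) := rfl
    have e2 : flipT k A (Units.val F⁻¹) = ↑((uMap k (flipT k A) F)⁻¹) := rfl
    rw [map_mul, map_mul, hR1 a, hval, e1, e2]
    simp only [mul_assoc, Units.inv_mul_cancel_left, Units.mul_inv_cancel_left]
  have c12f : uMap k w12 (uMap k (leg12 k A) F * uMap k (comulLeft k A) (twistR R F)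
          * (uMap k (leg12 k A) F)⁻¹) * uMap k (leg12 k A) (twistR R F)
      = uMap k (leg12 k A) (twistR R F) * (uMap k (leg12 k A) F
          * uMap k (comulLeft k A) (twistR R F) * (uMap k (leg12 k A) F)⁻¹) := by
    apply Units.ext
    simpa only [Units.val_mul, uMap_val, uMap_inv_val]
      using K12F F (twistR R F) (fun a => hG1' a) ↑(twistR R F)
  have U4 : uMap k (leg12 k A) (twistR R F) * uMap k (leg13 k A) (twistR R F)
        * uMap k (leg23 k A) (twistR R F)
      = uMap k (leg23 k A) (twistR R F) * uMap k (leg13 k A) (twistR R F)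
          * uMap k (leg12 k A) (twistR R F) := by
    calc uMap k (leg12 k A) (twistR R F) * uMap k (leg13 k A) (twistR R F)
          * uMap k (leg23 k A) (twistR R F)
        = uMap k (leg12 k A) (twistR R F) * (uMap k (leg13 k A) (twistR R F)
            * uMap k (leg23 k A) (twistR R F)) := by rw [mul_assoc]
      _ = uMap k (leg12 k A) (twistR R F) * (uMap k (leg12 k A) F
            * uMap k (comulLeft k A) (twistR R F) * (uMap k (leg12 k A) F)⁻¹) := by
          rw [U2]
      _ = uMap k w12 (uMap k (leg12 k A) F * uMap k (comulLeft k A) (twistR R F)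
            * (uMap k (leg12 k A) F)⁻¹) * uMap k (leg12 k A) (twistR R F) := c12f.symm
      _ = uMap k w12 (uMap k (leg13 k A) (twistR R F)
            * uMap k (leg23 k A) (twistR R F)) * uMap k (leg12 k A) (twistR R F) := by
          rw [U2]
      _ = uMap k (leg23 k A) (twistR R F) * uMap k (leg13 k A) (twistR R F)
          * uMap k (leg12 k A) (twistR R F) := by
          rw [map_mul, uw12_l13, uw12_l23]
  refine ⟨?_, ?_, ?_, ?_⟩
  · intro a
    calc flipT k A (twistComul F a)
        = flipT k A (twistComul F a) * ↑(twistR R F) * ↑(twistR R F)⁻¹ :=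
          (Units.mul_inv_cancel_right _ _).symm
      _ = ↑(twistR R F) * twistComul F a * ↑(twistR R F)⁻¹ := by rw [hG1' a]
  · have h0 := congrArg Units.val U2
    simpa only [twistComulLeft, Units.val_mul, uMap_val, uMap_inv_val] using h0
  · have h0 := congrArg Units.val U3
    simpa only [twistComulRight, Units.val_mul, uMap_val, uMap_inv_val] using h0
  · have h0 := congrArg Units.val U4
    simpa only [Units.val_mul, uMap_val] using h0


end
end

section
/- The ordered partial products Q_N := M_{2N}(ζ)^{−1} M_{2N−1}(ζ)^{−1} ⋯ M₂(ζ)^{−1} M₁(ζ)^{−1} converge entrywise as N → ∞, and lim_{N→∞} Q_N = φ(ζ²;p) · E(ζ;p), where E(ζ;p) is the 4×4 matrix with entries a_E in positions (1,1) and (4,4), d_E in positions (1,4) and (4,1), b_E in positions (2,2) and (3,3), c_E in positions (2,3) and (3,2), zeros elsewhere, and the entries are determined by a_E ± d_E = (∓ p^{1/2} q ζ; p)_∞ / (∓ p^{1/2} q^{−1} ζ; p)_∞ and b_E ± c_E = (∓ p q ζ; p)_∞ / (∓ p q^{−1} ζ; p)_∞ (upper signs for the sum, lower signs for the difference). -/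
open Matrix

noncomputable section

/-- The q-Pochhammer symbol `(a;t)_∞ = ∏_{k≥0} (1 - a t^k)`. -/
def qpoch (a t : ℂ) : ℂ := ∏' k : ℕ, (1 - a * t ^ k)

/-- The double infinite product `(a;t₁,t₂)_∞ = ∏_{i,j≥0} (1 - a t₁^i t₂^j)`. -/
def qpoch2 (a t₁ t₂ : ℂ) : ℂ := ∏' kl : ℕ × ℕ, (1 - a * t₁ ^ kl.1 * t₂ ^ kl.2)

/-- `ρ(z) = q^{-1/2} (q²z;q⁴)_∞² / ((z;q⁴)_∞ (q⁴z;q⁴)_∞)`. -/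
def rho0 (q sq z : ℂ) : ℂ :=
  sq⁻¹ * qpoch (q ^ 2 * z) (q ^ 4) ^ 2 / (qpoch z (q ^ 4) * qpoch (q ^ 4 * z) (q ^ 4))

/-- `b(z) = (1-z)q/(1-q²z)`. -/
def bbf (q z : ℂ) : ℂ := (1 - z) * q / (1 - q ^ 2 * z)

/-- `c(z) = (1-q²)/(1-q²z)`. -/
def ccf (q z : ℂ) : ℂ := (1 - q ^ 2) / (1 - q ^ 2 * z)

/-- `φ(z;p) = (pz;q⁴,p)_∞ (pq⁴z;q⁴,p)_∞ / (pq²z;q⁴,p)_∞²`. -/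
def phiF (q p z : ℂ) : ℂ :=
  qpoch2 (p * z) (q ^ 4) p * qpoch2 (p * q ^ 4 * z) (q ^ 4) p /
    qpoch2 (p * q ^ 2 * z) (q ^ 4) p ^ 2

/-- `b_l = b(p^l ζ²)`. -/
def bl (q p ζ : ℂ) (l : ℕ) : ℂ := bbf q (p ^ l * ζ ^ 2)

/-- `c_l = p^{l/2} ζ c(p^l ζ²)`. -/
def cl (q p sp ζ : ℂ) (l : ℕ) : ℂ := sp ^ l * ζ * ccf q (p ^ l * ζ ^ 2)

/-- The `l`-th factor `M_l(ζ)` of the infinite product defining the vertex-type twistor. -/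
def Ml (q sq p sp ζ : ℂ) (l : ℕ) : Matrix (Fin 4) (Fin 4) ℂ :=
  rho0 q sq (p ^ l * ζ ^ 2) •
    (if l % 2 = 1 then
      !![bl q p ζ l, 0, 0, cl q p sp ζ l;
         0, 1, 0, 0;
         0, 0, 1, 0;
         cl q p sp ζ l, 0, 0, bl q p ζ l]
    else
      !![1, 0, 0, 0;
         0, bl q p ζ l, cl q p sp ζ l, 0;
         0, cl q p sp ζ l, bl q p ζ l, 0;
         0, 0, 0, 1])

/-- The ordered partial product `Q_N = M_{2N}⁻¹ M_{2N-1}⁻¹ ⋯ M₂⁻¹ M₁⁻¹`. -/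
def Qprod (q sq p sp ζ : ℂ) : ℕ → Matrix (Fin 4) (Fin 4) ℂ
  | 0 => 1
  | N + 1 => (Ml q sq p sp ζ (2 * N + 2))⁻¹ * (Ml q sq p sp ζ (2 * N + 1))⁻¹ *
      Qprod q sq p sp ζ N

/-- `a_E + d_E`. -/
def aPlusdE (q p sp ζ : ℂ) : ℂ := qpoch (-(sp * q * ζ)) p / qpoch (-(sp * q⁻¹ * ζ)) p
/-- `a_E - d_E`. -/
def aMinusdE (q p sp ζ : ℂ) : ℂ := qpoch (sp * q * ζ) p / qpoch (sp * q⁻¹ * ζ) p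
/-- `b_E + c_E`. -/
def bPluscE (q p ζ : ℂ) : ℂ := qpoch (-(p * q * ζ)) p / qpoch (-(p * q⁻¹ * ζ)) p
/-- `b_E - c_E`. -/
def bMinuscE (q p ζ : ℂ) : ℂ := qpoch (p * q * ζ) p / qpoch (p * q⁻¹ * ζ) p

def aE (q p sp ζ : ℂ) : ℂ := (aPlusdE q p sp ζ + aMinusdE q p sp ζ) / 2
def dE (q p sp ζ : ℂ) : ℂ := (aPlusdE q p sp ζ - aMinusdE q p sp ζ) / 2
def bE (q p ζ : ℂ) : ℂ := (bPluscE q p ζ + bMinuscE q p ζ) / 2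
def cE (q p ζ : ℂ) : ℂ := (bPluscE q p ζ - bMinuscE q p ζ) / 2

/-- The matrix `E(ζ;p)`, the image of the vertex-type twistor in the tensor square of
the two-dimensional evaluation representation (without the scalar prefactor `φ(ζ²;p)`). -/
def Emat (q p sp ζ : ℂ) : Matrix (Fin 4) (Fin 4) ℂ :=
  !![aE q p sp ζ, 0, 0, dE q p sp ζ;
     0, bE q p ζ, cE q p ζ, 0;
     0, cE q p ζ, bE q p ζ, 0;
     dE q p sp ζ, 0, 0, aE q p sp ζ]

/-! ### Auxiliary material -/

section InfProdTools
open Filter Finset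

variable {ι : Type*}

lemma summable_log_one_add {f : ι → ℂ} (hf : Summable f) :
    Summable (fun i => Complex.log (1 + f i)) := by
  have h2 : ∀ᶠ i in Filter.cofinite, ‖f i‖ ≤ 1/2 := by
    have := hf.tendsto_cofinite_zero.norm
    simp only [norm_zero] at this
    exact this.eventually_le_const (by norm_num)
  refine Summable.of_norm_bounded_eventually (g := fun i => 3/2 * ‖f i‖) (hf.norm.mul_left _) ?_
  filter_upwards [h2] with i hi
  exact Complex.norm_log_one_add_half_le_self hi

lemma hasProd_one_add {f : ι → ℂ} (hf : Summable f) (h0 : ∀ i, 1 + f i ≠ 0) :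
    HasProd (fun i => 1 + f i) (∏' i, (1 + f i)) :=
  (Complex.hasProd_of_hasSum_log (f := fun i => 1 + f i) h0
    (summable_log_one_add hf).hasSum).multipliable.hasProd

lemma tprod_one_add_ne_zero {f : ι → ℂ} (hf : Summable f) (h0 : ∀ i, 1 + f i ≠ 0) :
    (∏' i, (1 + f i)) ≠ 0 := by
  have := Complex.cexp_tsum_eq_tprod (f := fun i => 1 + f i) h0 (summable_log_one_add hf)
  rw [← this]
  exact Complex.exp_ne_zero _

variable {a t t₁ t₂ : ℂ}

lemma summable_qpoch (a : ℂ) (ht : ‖t‖ < 1) :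
    Summable (fun k : ℕ => -(a * t ^ k)) := by
  exact ((summable_geometric_of_norm_lt_one ht).mul_left a).neg

lemma hasProd_qpoch (ht : ‖t‖ < 1) (h0 : ∀ k : ℕ, 1 - a * t ^ k ≠ 0) :
    HasProd (fun k : ℕ => 1 - a * t ^ k) (qpoch a t) := by
  have := hasProd_one_add (summable_qpoch a ht) (fun k => by
    rw [← sub_eq_add_neg]; exact h0 k)
  simpa only [← sub_eq_add_neg, qpoch] using this

lemma qpoch_ne_zero (ht : ‖t‖ < 1) (h0 : ∀ k : ℕ, 1 - a * t ^ k ≠ 0) :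
    qpoch a t ≠ 0 := by
  have := tprod_one_add_ne_zero (summable_qpoch a ht) (fun k => by
    rw [← sub_eq_add_neg]; exact h0 k)
  simpa only [← sub_eq_add_neg, qpoch] using this

lemma tendsto_qpoch (ht : ‖t‖ < 1) (h0 : ∀ k : ℕ, 1 - a * t ^ k ≠ 0) :
    Filter.Tendsto (fun N => ∏ k ∈ Finset.range N, (1 - a * t ^ k)) Filter.atTop
      (nhds (qpoch a t)) :=
  (hasProd_qpoch ht h0).tendsto_prod_nat

lemma summable_qpoch2 (a : ℂ) (ht₁ : ‖t₁‖ < 1) (ht₂ : ‖t₂‖ < 1) :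
    Summable (fun kl : ℕ × ℕ => -(a * t₁ ^ kl.1 * t₂ ^ kl.2)) := by
  have h1 : Summable (fun i : ℕ => ‖a * t₁ ^ i‖) :=
    ((summable_geometric_of_norm_lt_one ht₁).mul_left a).norm
  have h2 : Summable (fun j : ℕ => ‖t₂ ^ j‖) :=
    (summable_geometric_of_norm_lt_one ht₂).norm
  have h3 : Summable (fun kl : ℕ × ℕ => (a * t₁ ^ kl.1) * t₂ ^ kl.2) :=
    summable_mul_of_summable_norm (R := ℂ) (f := fun i : ℕ => a * t₁ ^ i)
      (g := fun j : ℕ => t₂ ^ j) h1 h2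
  simpa only [mul_assoc] using h3.neg

lemma hasProd_qpoch2 (ht₁ : ‖t₁‖ < 1) (ht₂ : ‖t₂‖ < 1)
    (h0 : ∀ i j : ℕ, 1 - a * t₁ ^ i * t₂ ^ j ≠ 0) :
    HasProd (fun kl : ℕ × ℕ => 1 - a * t₁ ^ kl.1 * t₂ ^ kl.2) (qpoch2 a t₁ t₂) := by
  have := hasProd_one_add (summable_qpoch2 a ht₁ ht₂) (fun kl => by
    rw [← sub_eq_add_neg]; exact h0 kl.1 kl.2)
  simpa only [← sub_eq_add_neg, qpoch2] using this

lemma qpoch2_ne_zero (ht₁ : ‖t₁‖ < 1) (ht₂ : ‖t₂‖ < 1)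
    (h0 : ∀ i j : ℕ, 1 - a * t₁ ^ i * t₂ ^ j ≠ 0) : qpoch2 a t₁ t₂ ≠ 0 := by
  have := tprod_one_add_ne_zero (summable_qpoch2 a ht₁ ht₂) (fun kl => by
    rw [← sub_eq_add_neg]; exact h0 kl.1 kl.2)
  simpa only [← sub_eq_add_neg, qpoch2] using this

lemma hasProd_qpoch2_slices (ht₁ : ‖t₁‖ < 1) (ht₂ : ‖t₂‖ < 1)
    (h0 : ∀ i j : ℕ, 1 - a * t₁ ^ i * t₂ ^ j ≠ 0) :
    HasProd (fun j : ℕ => qpoch (a * t₂ ^ j) t₁) (qpoch2 a t₁ t₂) := by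
  have hmain : HasProd (fun kl : ℕ × ℕ => 1 - a * t₁ ^ kl.2 * t₂ ^ kl.1) (qpoch2 a t₁ t₂) :=
    (Equiv.prodComm ℕ ℕ).hasProd_iff.mpr (hasProd_qpoch2 ht₁ ht₂ h0)
  refine hmain.prod_fiberwise (fun j => ?_)
  have := hasProd_qpoch (a := a * t₂ ^ j) ht₁ (fun i => by
    have := h0 i j; intro hc; apply this; rw [← hc]; ring)
  exact this.congr_fun (fun i => by ring)

lemma tendsto_qpoch2 (ht₁ : ‖t₁‖ < 1) (ht₂ : ‖t₂‖ < 1)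
    (h0 : ∀ i j : ℕ, 1 - a * t₁ ^ i * t₂ ^ j ≠ 0) :
    Filter.Tendsto (fun N => ∏ j ∈ Finset.range N, qpoch (a * t₂ ^ j) t₁) Filter.atTop
      (nhds (qpoch2 a t₁ t₂)) :=
  (hasProd_qpoch2_slices ht₁ ht₂ h0).tendsto_prod_nat

end InfProdTools

section MatrixTools

set_option maxHeartbeats 3000000

lemma odd_right_inv (r a b : ℂ) (hr : r ≠ 0) (ha : a ≠ 0) (hb : b ≠ 0) :
    (r • !![(a+b)/2, 0, 0, (a-b)/2; 0, 1, 0, 0; 0, 0, 1, 0; (a-b)/2, 0, 0, (a+b)/2]) *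
    (r⁻¹ • !![(a⁻¹+b⁻¹)/2, 0, 0, (a⁻¹-b⁻¹)/2; 0, 1, 0, 0; 0, 0, 1, 0;
       (a⁻¹-b⁻¹)/2, 0, 0, (a⁻¹+b⁻¹)/2]) = 1 := by
  ext i j
  fin_cases i <;> fin_cases j <;>
    simp [Matrix.mul_apply, Fin.sum_univ_four, Matrix.one_apply, Matrix.vecHead,
      Matrix.vecTail] <;>
    field_simp <;> (try ring) <;> field_simp

lemma even_right_inv (r a b : ℂ) (hr : r ≠ 0) (ha : a ≠ 0) (hb : b ≠ 0) :
    (r • !![1, 0, 0, 0; 0, (a+b)/2, (a-b)/2, 0; 0, (a-b)/2, (a+b)/2, 0; 0, 0, 0, 1]) *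
    (r⁻¹ • !![1, 0, 0, 0; 0, (a⁻¹+b⁻¹)/2, (a⁻¹-b⁻¹)/2, 0;
       0, (a⁻¹-b⁻¹)/2, (a⁻¹+b⁻¹)/2, 0; 0, 0, 0, 1]) = 1 := by
  ext i j
  fin_cases i <;> fin_cases j <;>
    simp [Matrix.mul_apply, Fin.sum_univ_four, Matrix.one_apply, Matrix.vecHead,
      Matrix.vecTail] <;>
    field_simp <;> (try ring) <;> field_simp

def Qm (w x y z : ℂ) : Matrix (Fin 4) (Fin 4) ℂ :=
  !![(w+x)/2, 0, 0, (w-x)/2;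
     0, (y+z)/2, (y-z)/2, 0;
     0, (y-z)/2, (y+z)/2, 0;
     (w-x)/2, 0, 0, (w+x)/2]

lemma Qm_one : Qm 1 1 1 1 = 1 := by
  unfold Qm
  ext i j
  fin_cases i <;> fin_cases j <;>
    simp [Matrix.one_apply, Matrix.vecHead, Matrix.vecTail]

lemma step_mul (r1 r2 a1 b1 a2 b2 w x y z : ℂ) :
    (r2⁻¹ • !![1, 0, 0, 0; 0, (a2⁻¹+b2⁻¹)/2, (a2⁻¹-b2⁻¹)/2, 0;
       0, (a2⁻¹-b2⁻¹)/2, (a2⁻¹+b2⁻¹)/2, 0; 0, 0, 0, 1]) *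
    (r1⁻¹ • !![(a1⁻¹+b1⁻¹)/2, 0, 0, (a1⁻¹-b1⁻¹)/2; 0, 1, 0, 0; 0, 0, 1, 0;
       (a1⁻¹-b1⁻¹)/2, 0, 0, (a1⁻¹+b1⁻¹)/2]) *
    Qm w x y z =
    Qm ((r1*r2*a1)⁻¹ * w) ((r1*r2*b1)⁻¹ * x) ((r1*r2*a2)⁻¹ * y) ((r1*r2*b2)⁻¹ * z) := by
  unfold Qm
  ext i j
  fin_cases i <;> fin_cases j <;>
    simp [Matrix.mul_apply, Fin.sum_univ_four, Matrix.vecHead, Matrix.vecTail, mul_inv] <;>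
    ring

lemma Qm_decomp (w x y z : ℂ) : Qm w x y z =
    w • !![(1:ℂ)/2,0,0,1/2;0,0,0,0;0,0,0,0;1/2,0,0,1/2] +
    x • !![(1:ℂ)/2,0,0,-(1/2);0,0,0,0;0,0,0,0;-(1/2),0,0,1/2] +
    y • !![(0:ℂ),0,0,0;0,1/2,1/2,0;0,1/2,1/2,0;0,0,0,0] +
    z • !![(0:ℂ),0,0,0;0,1/2,-(1/2),0;0,-(1/2),1/2,0;0,0,0,0] := by
  unfold Qm
  ext i j
  fin_cases i <;> fin_cases j <;>
    simp [Matrix.vecHead, Matrix.vecTail] <;> ring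

open Filter in
lemma tendsto_Qm (w x y z : ℕ → ℂ) (a b c d : ℂ)
    (hw : Tendsto w atTop (nhds a)) (hx : Tendsto x atTop (nhds b))
    (hy : Tendsto y atTop (nhds c)) (hz : Tendsto z atTop (nhds d)) :
    Tendsto (fun N => Qm (w N) (x N) (y N) (z N)) atTop (nhds (Qm a b c d)) := by
  simp only [Qm_decomp]
  exact (((hw.smul_const _).add (hx.smul_const _)).add (hy.smul_const _)).add
    (hz.smul_const _)

end MatrixTools

section Twistor

def plF (q p sp ζ : ℂ) (l : ℕ) : ℂ := bl q p ζ l + cl q p sp ζ l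
def mnF (q p sp ζ : ℂ) (l : ℕ) : ℂ := bl q p ζ l - cl q p sp ζ l
def rrF (q sq p ζ : ℂ) (l : ℕ) : ℂ := rho0 q sq (p ^ l * ζ ^ 2)

variable (q sq p sp ζ : ℂ)

lemma bl_eq (l : ℕ) : bl q p ζ l = (plF q p sp ζ l + mnF q p sp ζ l)/2 := by
  unfold plF mnF; ring
lemma cl_eq (l : ℕ) : cl q p sp ζ l = (plF q p sp ζ l - mnF q p sp ζ l)/2 := by
  unfold plF mnF; ring

lemma Ml_odd_form (l : ℕ) (hl : l % 2 = 1) :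
    Ml q sq p sp ζ l = rrF q sq p ζ l •
      !![(plF q p sp ζ l + mnF q p sp ζ l)/2, 0, 0, (plF q p sp ζ l - mnF q p sp ζ l)/2;
         0, 1, 0, 0; 0, 0, 1, 0;
         (plF q p sp ζ l - mnF q p sp ζ l)/2, 0, 0, (plF q p sp ζ l + mnF q p sp ζ l)/2] := by
  unfold Ml rrF
  rw [if_pos hl, bl_eq q p sp ζ l, cl_eq q p sp ζ l]

lemma Ml_even_form (l : ℕ) (hl : l % 2 = 0) :
    Ml q sq p sp ζ l = rrF q sq p ζ l •
      !![1, 0, 0, 0;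
         0, (plF q p sp ζ l + mnF q p sp ζ l)/2, (plF q p sp ζ l - mnF q p sp ζ l)/2, 0;
         0, (plF q p sp ζ l - mnF q p sp ζ l)/2, (plF q p sp ζ l + mnF q p sp ζ l)/2, 0;
         0, 0, 0, 1] := by
  unfold Ml rrF
  rw [if_neg (by omega), bl_eq q p sp ζ l, cl_eq q p sp ζ l]

lemma Ml_inv_odd (l : ℕ) (hl : l % 2 = 1) (hr : rrF q sq p ζ l ≠ 0)
    (hpl : plF q p sp ζ l ≠ 0) (hmn : mnF q p sp ζ l ≠ 0) :
    (Ml q sq p sp ζ l)⁻¹ = (rrF q sq p ζ l)⁻¹ •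
      !![((plF q p sp ζ l)⁻¹ + (mnF q p sp ζ l)⁻¹)/2, 0, 0,
           ((plF q p sp ζ l)⁻¹ - (mnF q p sp ζ l)⁻¹)/2;
         0, 1, 0, 0; 0, 0, 1, 0;
         ((plF q p sp ζ l)⁻¹ - (mnF q p sp ζ l)⁻¹)/2, 0, 0,
           ((plF q p sp ζ l)⁻¹ + (mnF q p sp ζ l)⁻¹)/2] := by
  apply Matrix.inv_eq_right_inv
  rw [Ml_odd_form q sq p sp ζ l hl]
  exact odd_right_inv _ _ _ hr hpl hmn

lemma Ml_inv_even (l : ℕ) (hl : l % 2 = 0) (hr : rrF q sq p ζ l ≠ 0)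
    (hpl : plF q p sp ζ l ≠ 0) (hmn : mnF q p sp ζ l ≠ 0) :
    (Ml q sq p sp ζ l)⁻¹ = (rrF q sq p ζ l)⁻¹ •
      !![1, 0, 0, 0;
         0, ((plF q p sp ζ l)⁻¹ + (mnF q p sp ζ l)⁻¹)/2,
            ((plF q p sp ζ l)⁻¹ - (mnF q p sp ζ l)⁻¹)/2, 0;
         0, ((plF q p sp ζ l)⁻¹ - (mnF q p sp ζ l)⁻¹)/2,
            ((plF q p sp ζ l)⁻¹ + (mnF q p sp ζ l)⁻¹)/2, 0;
         0, 0, 0, 1] := by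
  apply Matrix.inv_eq_right_inv
  rw [Ml_even_form q sq p sp ζ l hl]
  exact even_right_inv _ _ _ hr hpl hmn

lemma Qprod_eq (hr : ∀ l, 1 ≤ l → rrF q sq p ζ l ≠ 0)
    (hpl : ∀ l, 1 ≤ l → plF q p sp ζ l ≠ 0) (hmn : ∀ l, 1 ≤ l → mnF q p sp ζ l ≠ 0) :
    ∀ N, Qprod q sq p sp ζ N = Qm
      (∏ k ∈ Finset.range N,
        (rrF q sq p ζ (2*k+1) * rrF q sq p ζ (2*k+2) * plF q p sp ζ (2*k+1))⁻¹)
      (∏ k ∈ Finset.range N,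
        (rrF q sq p ζ (2*k+1) * rrF q sq p ζ (2*k+2) * mnF q p sp ζ (2*k+1))⁻¹)
      (∏ k ∈ Finset.range N,
        (rrF q sq p ζ (2*k+1) * rrF q sq p ζ (2*k+2) * plF q p sp ζ (2*k+2))⁻¹)
      (∏ k ∈ Finset.range N,
        (rrF q sq p ζ (2*k+1) * rrF q sq p ζ (2*k+2) * mnF q p sp ζ (2*k+2))⁻¹)
  | 0 => by simp [Qprod, Qm_one]
  | (N+1) => by
    rw [show Qprod q sq p sp ζ (N+1) = (Ml q sq p sp ζ (2 * N + 2))⁻¹ *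
        (Ml q sq p sp ζ (2 * N + 1))⁻¹ * Qprod q sq p sp ζ N from rfl,
      Qprod_eq hr hpl hmn N,
      Ml_inv_odd q sq p sp ζ (2*N+1) (by omega) (hr _ (by omega)) (hpl _ (by omega))
        (hmn _ (by omega)),
      Ml_inv_even q sq p sp ζ (2*N+2) (by omega) (hr _ (by omega)) (hpl _ (by omega))
        (hmn _ (by omega)),
      step_mul]
    rw [Finset.prod_range_succ_comm, Finset.prod_range_succ_comm, Finset.prod_range_succ_comm,
      Finset.prod_range_succ_comm]

lemma plF_eq (l : ℕ) (hq : q ≠ 0) (hsp : sp^2 = p)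
    (hz : 1 - q^2 * (p^l * ζ^2) ≠ 0) (hW : 1 + q * (sp^l * ζ) ≠ 0) :
    plF q p sp ζ l = q * (1 + q⁻¹ * (sp^l * ζ)) / (1 + q * (sp^l * ζ)) := by
  have hw2 : (sp^l * ζ)^2 = p^l * ζ^2 := by rw [← hsp]; ring
  unfold plF bl cl bbf ccf
  rw [← hw2] at hz ⊢
  rw [mul_div_assoc', ← add_div, div_eq_div_iff hz hW]
  linear_combination (-((sp^l * ζ) * (1 - q^2 * (sp^l * ζ)^2))) * mul_inv_cancel₀ hq

lemma mnF_eq (l : ℕ) (hq : q ≠ 0) (hsp : sp^2 = p)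
    (hz : 1 - q^2 * (p^l * ζ^2) ≠ 0) (hW : 1 - q * (sp^l * ζ) ≠ 0) :
    mnF q p sp ζ l = q * (1 - q⁻¹ * (sp^l * ζ)) / (1 - q * (sp^l * ζ)) := by
  have hw2 : (sp^l * ζ)^2 = p^l * ζ^2 := by rw [← hsp]; ring
  unfold mnF bl cl bbf ccf
  rw [← hw2] at hz ⊢
  rw [mul_div_assoc', ← sub_div, div_eq_div_iff hz hW]
  linear_combination (((sp^l * ζ) * (1 - q^2 * (sp^l * ζ)^2))) * mul_inv_cancel₀ hq

lemma e_eq (l1 l2 : ℕ) (ev D W : ℂ) (hsq0 : sq ≠ 0) (hsq : sq^2 = q)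
    (hev : ev = q * D / W) (hW : W ≠ 0) (hD : D ≠ 0)
    (h1a : qpoch (p^l1*ζ^2) (q^4) ≠ 0) (h1b : qpoch (p^l2*ζ^2) (q^4) ≠ 0)
    (h2a : qpoch (q^4*(p^l1*ζ^2)) (q^4) ≠ 0) (h2b : qpoch (q^4*(p^l2*ζ^2)) (q^4) ≠ 0)
    (h3a : qpoch (q^2*(p^l1*ζ^2)) (q^4) ≠ 0) (h3b : qpoch (q^2*(p^l2*ζ^2)) (q^4) ≠ 0) :
    (rrF q sq p ζ l1 * rrF q sq p ζ l2 * ev)⁻¹ =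
      (qpoch (p^l1*ζ^2) (q^4) * qpoch (p^l2*ζ^2) (q^4)) *
      (qpoch (q^4*(p^l1*ζ^2)) (q^4) * qpoch (q^4*(p^l2*ζ^2)) (q^4)) * W /
      ((qpoch (q^2*(p^l1*ζ^2)) (q^4) * qpoch (q^2*(p^l2*ζ^2)) (q^4))^2 * D) := by
  subst hev hsq
  unfold rrF rho0
  field_simp

open Finset in
lemma prod_pair (f : ℕ → ℂ) : ∀ N, ∏ k ∈ range N, (f (2*k+1) * f (2*k+2)) =
    ∏ l ∈ range (2*N), f (l+1)
  | 0 => by simp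
  | (N+1) => by
    rw [prod_range_succ, prod_pair f N, show 2*(N+1) = (2*N+1)+1 by ring, prod_range_succ,
      prod_range_succ]
    ring

open Filter Finset in
lemma tendsto_OP_like (e g1 g2 g3 wn dn : ℕ → ℂ) (L1 L2 L3 LW LD : ℂ)
    (he : ∀ k, e k = (g1 (2*k+1) * g1 (2*k+2)) * (g2 (2*k+1) * g2 (2*k+2)) * wn k /
          ((g3 (2*k+1) * g3 (2*k+2))^2 * dn k))
    (h1 : Tendsto (fun N => ∏ l ∈ range N, g1 (l+1)) atTop (nhds L1))
    (h2 : Tendsto (fun N => ∏ l ∈ range N, g2 (l+1)) atTop (nhds L2))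
    (h3 : Tendsto (fun N => ∏ l ∈ range N, g3 (l+1)) atTop (nhds L3))
    (hw : Tendsto (fun N => ∏ k ∈ range N, wn k) atTop (nhds LW))
    (hd : Tendsto (fun N => ∏ k ∈ range N, dn k) atTop (nhds LD))
    (hL3 : L3 ≠ 0) (hLD : LD ≠ 0) :
    Tendsto (fun N => ∏ k ∈ range N, e k) atTop (nhds (L1 * L2 * LW / (L3^2 * LD))) := by
  have h2N : Tendsto (fun N : ℕ => 2*N) atTop atTop :=
    tendsto_atTop_mono (fun n => by simp only [id_eq]; omega) tendsto_id
  have key : ∀ N, ∏ k ∈ range N, e k =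
      ((∏ l ∈ range (2*N), g1 (l+1)) * (∏ l ∈ range (2*N), g2 (l+1)) *
        ∏ k ∈ range N, wn k) /
      ((∏ l ∈ range (2*N), g3 (l+1))^2 * ∏ k ∈ range N, dn k) := by
    intro N
    rw [Finset.prod_congr rfl (fun k _ => he k), Finset.prod_div_distrib]
    congr 1
    · rw [Finset.prod_mul_distrib, Finset.prod_mul_distrib, prod_pair g1, prod_pair g2]
    · rw [Finset.prod_mul_distrib, Finset.prod_pow, prod_pair g3]
  have T : Tendsto (fun N =>
      ((∏ l ∈ range (2*N), g1 (l+1)) * (∏ l ∈ range (2*N), g2 (l+1)) *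
        ∏ k ∈ range N, wn k) /
      ((∏ l ∈ range (2*N), g3 (l+1))^2 * ∏ k ∈ range N, dn k)) atTop
      (nhds (L1 * L2 * LW / (L3^2 * LD))) :=
    (((h1.comp h2N).mul (h2.comp h2N)).mul hw).div
      (((h3.comp h2N).pow 2).mul hd) (mul_ne_zero (pow_ne_zero 2 hL3) hLD)
  exact T.congr (fun N => (key N).symm)

end Twistor


/-- The ordered partial products `Q_N = M_{2N}⁻¹ ⋯ M₁⁻¹` converge
entrywise as `N → ∞`, with limit `φ(ζ²;p) E(ζ;p)`. -/
theorem vertex_twistor_product_converges (q sq p sp ζ : ℂ)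
    (hq0 : 0 < ‖q‖) (hq1 : ‖q‖ < 1)
    (hp0 : 0 < ‖p‖) (hp1 : ‖p‖ < 1)
    (hsq : sq ^ 2 = q) (hsp : sp ^ 2 = p)
    (hgen : ∀ l : ℕ, 1 ≤ l →
      (∀ k : ℕ, p ^ l * ζ ^ 2 ≠ (q ^ (2 * k))⁻¹) ∧
      (bl q p ζ l) ^ 2 ≠ (cl q p sp ζ l) ^ 2) :
    Filter.Tendsto (Qprod q sq p sp ζ) Filter.atTop
      (nhds (phiF q p (ζ ^ 2) • Emat q p sp ζ)) := by
  classical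
  -- basic nonvanishing
  have hqz : q ≠ 0 := by intro h; rw [h] at hq0; simp at hq0
  have hpz : p ≠ 0 := by intro h; rw [h] at hp0; simp at hp0
  have hsqz : sq ≠ 0 := by intro h; apply hqz; rw [← hsq, h]; ring
  have hspz : sp ≠ 0 := by intro h; apply hpz; rw [← hsp, h]; ring
  have habs4 : ‖q ^ 4‖ < 1 := by
    rw [norm_pow]
    exact pow_lt_one₀ (norm_nonneg q) hq1 (by norm_num)
  -- master factor nonvanishing
  have hfac : ∀ l, 1 ≤ l → ∀ m : ℕ, (1:ℂ) - (p^l*ζ^2) * q^(2*m) ≠ 0 := by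
    intro l hl m hc
    exact (hgen l hl).1 m (eq_inv_of_mul_eq_one_left (by linear_combination -hc))
  have hBg1 : ∀ l, 1 ≤ l → ∀ i : ℕ, (1:ℂ) - (p^l*ζ^2)*(q^4)^i ≠ 0 :=
    fun l hl i hc => hfac l hl (2*i) (by linear_combination hc)
  have hBg2 : ∀ l, 1 ≤ l → ∀ i : ℕ, (1:ℂ) - (q^4*(p^l*ζ^2))*(q^4)^i ≠ 0 :=
    fun l hl i hc => hfac l hl (2*i+2) (by linear_combination hc)
  have hBg3 : ∀ l, 1 ≤ l → ∀ i : ℕ, (1:ℂ) - (q^2*(p^l*ζ^2))*(q^4)^i ≠ 0 :=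
    fun l hl i hc => hfac l hl (2*i+1) (by linear_combination hc)
  have hg1ne : ∀ l, 1 ≤ l → qpoch (p^l*ζ^2) (q^4) ≠ 0 :=
    fun l hl => qpoch_ne_zero habs4 (hBg1 l hl)
  have hg2ne : ∀ l, 1 ≤ l → qpoch (q^4*(p^l*ζ^2)) (q^4) ≠ 0 :=
    fun l hl => qpoch_ne_zero habs4 (hBg2 l hl)
  have hg3ne : ∀ l, 1 ≤ l → qpoch (q^2*(p^l*ζ^2)) (q^4) ≠ 0 :=
    fun l hl => qpoch_ne_zero habs4 (hBg3 l hl)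
  have hrne : ∀ l, 1 ≤ l → rrF q sq p ζ l ≠ 0 := by
    intro l hl
    unfold rrF rho0
    exact div_ne_zero (mul_ne_zero (inv_ne_zero hsqz) (pow_ne_zero 2 (hg3ne l hl)))
      (mul_ne_zero (hg1ne l hl) (hg2ne l hl))
  have hplmn : ∀ l, 1 ≤ l → plF q p sp ζ l ≠ 0 ∧ mnF q p sp ζ l ≠ 0 := by
    intro l hl
    have hd : bl q p ζ l^2 - cl q p sp ζ l^2 ≠ 0 := sub_ne_zero.mpr (hgen l hl).2
    have e : plF q p sp ζ l * mnF q p sp ζ l = bl q p ζ l^2 - cl q p sp ζ l^2 := by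
      unfold plF mnF; ring
    rw [← e] at hd
    exact mul_ne_zero_iff.mp hd
  have hzden : ∀ l, 1 ≤ l → (1:ℂ) - q^2*(p^l*ζ^2) ≠ 0 :=
    fun l hl hc => hfac l hl 1 (by linear_combination hc)
  have hWne : ∀ l, 1 ≤ l → ((1:ℂ) + q*(sp^l*ζ) ≠ 0 ∧ (1:ℂ) - q*(sp^l*ζ) ≠ 0) := by
    intro l hl
    have key : ((1:ℂ) - q*(sp^l*ζ)) * ((1:ℂ) + q*(sp^l*ζ)) ≠ 0 := by
      intro hc
      apply hfac l hl 1
      rw [← hsp]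
      linear_combination hc
    exact ⟨(mul_ne_zero_iff.mp key).2, (mul_ne_zero_iff.mp key).1⟩
  have hplq : ∀ l, 1 ≤ l →
      plF q p sp ζ l = q * (1 + q⁻¹ * (sp^l * ζ)) / (1 + q * (sp^l * ζ)) :=
    fun l hl => plF_eq q p sp ζ l hqz hsp (hzden l hl) (hWne l hl).1
  have hmnq : ∀ l, 1 ≤ l →
      mnF q p sp ζ l = q * (1 - q⁻¹ * (sp^l * ζ)) / (1 - q * (sp^l * ζ)) :=
    fun l hl => mnF_eq q p sp ζ l hqz hsp (hzden l hl) (hWne l hl).2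
  have hDop : ∀ l, 1 ≤ l → (1:ℂ) + q⁻¹*(sp^l*ζ) ≠ 0 := by
    intro l hl hc
    apply (hplmn l hl).1
    rw [hplq l hl, hc, mul_zero, zero_div]
  have hDom : ∀ l, 1 ≤ l → (1:ℂ) - q⁻¹*(sp^l*ζ) ≠ 0 := by
    intro l hl hc
    apply (hplmn l hl).2
    rw [hmnq l hl, hc, mul_zero, zero_div]
  -- the three qpoch2 limits
  have h0L1 : ∀ i j : ℕ, (1:ℂ) - (p*ζ^2)*(q^4)^i*p^j ≠ 0 :=
    fun i j hc => hBg1 (j+1) (by omega) i (by linear_combination hc)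
  have h0L2 : ∀ i j : ℕ, (1:ℂ) - (p*q^4*ζ^2)*(q^4)^i*p^j ≠ 0 :=
    fun i j hc => hBg2 (j+1) (by omega) i (by linear_combination hc)
  have h0L3 : ∀ i j : ℕ, (1:ℂ) - (p*q^2*ζ^2)*(q^4)^i*p^j ≠ 0 :=
    fun i j hc => hBg3 (j+1) (by omega) i (by linear_combination hc)
  have hL1 : Filter.Tendsto (fun N => ∏ l ∈ Finset.range N, qpoch (p^(l+1)*ζ^2) (q^4))
      Filter.atTop (nhds (qpoch2 (p*ζ^2) (q^4) p)) :=
    (tendsto_qpoch2 habs4 hp1 h0L1).congr (fun N => Finset.prod_congr rfl (fun j _ => by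
      rw [show p*ζ^2*p^j = p^(j+1)*ζ^2 from by ring]))
  have hL2 : Filter.Tendsto (fun N => ∏ l ∈ Finset.range N, qpoch (q^4*(p^(l+1)*ζ^2)) (q^4))
      Filter.atTop (nhds (qpoch2 (p*q^4*ζ^2) (q^4) p)) :=
    (tendsto_qpoch2 habs4 hp1 h0L2).congr (fun N => Finset.prod_congr rfl (fun j _ => by
      rw [show p*q^4*ζ^2*p^j = q^4*(p^(j+1)*ζ^2) from by ring]))
  have hL3 : Filter.Tendsto (fun N => ∏ l ∈ Finset.range N, qpoch (q^2*(p^(l+1)*ζ^2)) (q^4))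
      Filter.atTop (nhds (qpoch2 (p*q^2*ζ^2) (q^4) p)) :=
    (tendsto_qpoch2 habs4 hp1 h0L3).congr (fun N => Finset.prod_congr rfl (fun j _ => by
      rw [show p*q^2*ζ^2*p^j = q^2*(p^(j+1)*ζ^2) from by ring]))
  have hL3ne : qpoch2 (p*q^2*ζ^2) (q^4) p ≠ 0 := qpoch2_ne_zero habs4 hp1 h0L3
  -- the eight W/D limits
  have hfWop : ∀ k : ℕ, (1:ℂ) - (-(sp*q*ζ))*p^k ≠ 0 := fun k hc =>
    (hWne (2*k+1) (by omega)).1 (by rw [← hsp] at hc; linear_combination hc)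
  have hfDop : ∀ k : ℕ, (1:ℂ) - (-(sp*q⁻¹*ζ))*p^k ≠ 0 := fun k hc =>
    hDop (2*k+1) (by omega) (by rw [← hsp] at hc; linear_combination hc)
  have hfWom : ∀ k : ℕ, (1:ℂ) - (sp*q*ζ)*p^k ≠ 0 := fun k hc =>
    (hWne (2*k+1) (by omega)).2 (by rw [← hsp] at hc; linear_combination hc)
  have hfDom : ∀ k : ℕ, (1:ℂ) - (sp*q⁻¹*ζ)*p^k ≠ 0 := fun k hc =>
    hDom (2*k+1) (by omega) (by rw [← hsp] at hc; linear_combination hc)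
  have hfWip : ∀ k : ℕ, (1:ℂ) - (-(p*q*ζ))*p^k ≠ 0 := fun k hc =>
    (hWne (2*k+2) (by omega)).1 (by rw [← hsp] at hc; linear_combination hc)
  have hfDip : ∀ k : ℕ, (1:ℂ) - (-(p*q⁻¹*ζ))*p^k ≠ 0 := fun k hc =>
    hDop (2*k+2) (by omega) (by rw [← hsp] at hc; linear_combination hc)
  have hfWim : ∀ k : ℕ, (1:ℂ) - (p*q*ζ)*p^k ≠ 0 := fun k hc =>
    (hWne (2*k+2) (by omega)).2 (by rw [← hsp] at hc; linear_combination hc)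
  have hfDim : ∀ k : ℕ, (1:ℂ) - (p*q⁻¹*ζ)*p^k ≠ 0 := fun k hc =>
    hDom (2*k+2) (by omega) (by rw [← hsp] at hc; linear_combination hc)
  have hTWop : Filter.Tendsto (fun N => ∏ k ∈ Finset.range N, ((1:ℂ) + q*(sp^(2*k+1)*ζ)))
      Filter.atTop (nhds (qpoch (-(sp*q*ζ)) p)) :=
    (tendsto_qpoch hp1 hfWop).congr (fun N => Finset.prod_congr rfl (fun k _ => by
      rw [← hsp]; ring))
  have hTDop : Filter.Tendsto (fun N => ∏ k ∈ Finset.range N, ((1:ℂ) + q⁻¹*(sp^(2*k+1)*ζ)))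
      Filter.atTop (nhds (qpoch (-(sp*q⁻¹*ζ)) p)) :=
    (tendsto_qpoch hp1 hfDop).congr (fun N => Finset.prod_congr rfl (fun k _ => by
      rw [← hsp]; ring))
  have hTWom : Filter.Tendsto (fun N => ∏ k ∈ Finset.range N, ((1:ℂ) - q*(sp^(2*k+1)*ζ)))
      Filter.atTop (nhds (qpoch (sp*q*ζ) p)) :=
    (tendsto_qpoch hp1 hfWom).congr (fun N => Finset.prod_congr rfl (fun k _ => by
      rw [← hsp]; ring))
  have hTDom : Filter.Tendsto (fun N => ∏ k ∈ Finset.range N, ((1:ℂ) - q⁻¹*(sp^(2*k+1)*ζ)))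
      Filter.atTop (nhds (qpoch (sp*q⁻¹*ζ) p)) :=
    (tendsto_qpoch hp1 hfDom).congr (fun N => Finset.prod_congr rfl (fun k _ => by
      rw [← hsp]; ring))
  have hTWip : Filter.Tendsto (fun N => ∏ k ∈ Finset.range N, ((1:ℂ) + q*(sp^(2*k+2)*ζ)))
      Filter.atTop (nhds (qpoch (-(p*q*ζ)) p)) :=
    (tendsto_qpoch hp1 hfWip).congr (fun N => Finset.prod_congr rfl (fun k _ => by
      rw [← hsp]; ring))
  have hTDip : Filter.Tendsto (fun N => ∏ k ∈ Finset.range N, ((1:ℂ) + q⁻¹*(sp^(2*k+2)*ζ)))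
      Filter.atTop (nhds (qpoch (-(p*q⁻¹*ζ)) p)) :=
    (tendsto_qpoch hp1 hfDip).congr (fun N => Finset.prod_congr rfl (fun k _ => by
      rw [← hsp]; ring))
  have hTWim : Filter.Tendsto (fun N => ∏ k ∈ Finset.range N, ((1:ℂ) - q*(sp^(2*k+2)*ζ)))
      Filter.atTop (nhds (qpoch (p*q*ζ) p)) :=
    (tendsto_qpoch hp1 hfWim).congr (fun N => Finset.prod_congr rfl (fun k _ => by
      rw [← hsp]; ring))
  have hTDim : Filter.Tendsto (fun N => ∏ k ∈ Finset.range N, ((1:ℂ) - q⁻¹*(sp^(2*k+2)*ζ)))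
      Filter.atTop (nhds (qpoch (p*q⁻¹*ζ) p)) :=
    (tendsto_qpoch hp1 hfDim).congr (fun N => Finset.prod_congr rfl (fun k _ => by
      rw [← hsp]; ring))
  have hDopne : qpoch (-(sp*q⁻¹*ζ)) p ≠ 0 := qpoch_ne_zero hp1 hfDop
  have hDomne : qpoch (sp*q⁻¹*ζ) p ≠ 0 := qpoch_ne_zero hp1 hfDom
  have hDipne : qpoch (-(p*q⁻¹*ζ)) p ≠ 0 := qpoch_ne_zero hp1 hfDip
  have hDimne : qpoch (p*q⁻¹*ζ) p ≠ 0 := qpoch_ne_zero hp1 hfDim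
  -- the four scalar limits
  have TOP : Filter.Tendsto (fun N => ∏ k ∈ Finset.range N,
      (rrF q sq p ζ (2*k+1) * rrF q sq p ζ (2*k+2) * plF q p sp ζ (2*k+1))⁻¹)
      Filter.atTop (nhds (phiF q p (ζ^2) * aPlusdE q p sp ζ)) := by
    rw [show phiF q p (ζ^2) * aPlusdE q p sp ζ =
        qpoch2 (p*ζ^2) (q^4) p * qpoch2 (p*q^4*ζ^2) (q^4) p * qpoch (-(sp*q*ζ)) p /
        ((qpoch2 (p*q^2*ζ^2) (q^4) p)^2 * qpoch (-(sp*q⁻¹*ζ)) p) from by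
      unfold phiF aPlusdE; ring]
    refine tendsto_OP_like _ (fun l => qpoch (p^l*ζ^2) (q^4))
      (fun l => qpoch (q^4*(p^l*ζ^2)) (q^4)) (fun l => qpoch (q^2*(p^l*ζ^2)) (q^4))
      (fun k => 1 + q*(sp^(2*k+1)*ζ)) (fun k => 1 + q⁻¹*(sp^(2*k+1)*ζ)) _ _ _ _ _
      (fun k => ?_) hL1 hL2 hL3 hTWop hTDop hL3ne hDopne
    exact e_eq q sq p ζ (2*k+1) (2*k+2) _ _ _ hsqz hsq (hplq (2*k+1) (by omega))
      (hWne (2*k+1) (by omega)).1 (hDop (2*k+1) (by omega))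
      (hg1ne _ (by omega)) (hg1ne _ (by omega)) (hg2ne _ (by omega)) (hg2ne _ (by omega))
      (hg3ne _ (by omega)) (hg3ne _ (by omega))
  have TOM : Filter.Tendsto (fun N => ∏ k ∈ Finset.range N,
      (rrF q sq p ζ (2*k+1) * rrF q sq p ζ (2*k+2) * mnF q p sp ζ (2*k+1))⁻¹)
      Filter.atTop (nhds (phiF q p (ζ^2) * aMinusdE q p sp ζ)) := by
    rw [show phiF q p (ζ^2) * aMinusdE q p sp ζ =
        qpoch2 (p*ζ^2) (q^4) p * qpoch2 (p*q^4*ζ^2) (q^4) p * qpoch (sp*q*ζ) p /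
        ((qpoch2 (p*q^2*ζ^2) (q^4) p)^2 * qpoch (sp*q⁻¹*ζ) p) from by
      unfold phiF aMinusdE; ring]
    refine tendsto_OP_like _ (fun l => qpoch (p^l*ζ^2) (q^4))
      (fun l => qpoch (q^4*(p^l*ζ^2)) (q^4)) (fun l => qpoch (q^2*(p^l*ζ^2)) (q^4))
      (fun k => 1 - q*(sp^(2*k+1)*ζ)) (fun k => 1 - q⁻¹*(sp^(2*k+1)*ζ)) _ _ _ _ _
      (fun k => ?_) hL1 hL2 hL3 hTWom hTDom hL3ne hDomne
    exact e_eq q sq p ζ (2*k+1) (2*k+2) _ _ _ hsqz hsq (hmnq (2*k+1) (by omega))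
      (hWne (2*k+1) (by omega)).2 (hDom (2*k+1) (by omega))
      (hg1ne _ (by omega)) (hg1ne _ (by omega)) (hg2ne _ (by omega)) (hg2ne _ (by omega))
      (hg3ne _ (by omega)) (hg3ne _ (by omega))
  have TIP : Filter.Tendsto (fun N => ∏ k ∈ Finset.range N,
      (rrF q sq p ζ (2*k+1) * rrF q sq p ζ (2*k+2) * plF q p sp ζ (2*k+2))⁻¹)
      Filter.atTop (nhds (phiF q p (ζ^2) * bPluscE q p ζ)) := by
    rw [show phiF q p (ζ^2) * bPluscE q p ζ =
        qpoch2 (p*ζ^2) (q^4) p * qpoch2 (p*q^4*ζ^2) (q^4) p * qpoch (-(p*q*ζ)) p /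
        ((qpoch2 (p*q^2*ζ^2) (q^4) p)^2 * qpoch (-(p*q⁻¹*ζ)) p) from by
      unfold phiF bPluscE; ring]
    refine tendsto_OP_like _ (fun l => qpoch (p^l*ζ^2) (q^4))
      (fun l => qpoch (q^4*(p^l*ζ^2)) (q^4)) (fun l => qpoch (q^2*(p^l*ζ^2)) (q^4))
      (fun k => 1 + q*(sp^(2*k+2)*ζ)) (fun k => 1 + q⁻¹*(sp^(2*k+2)*ζ)) _ _ _ _ _
      (fun k => ?_) hL1 hL2 hL3 hTWip hTDip hL3ne hDipne
    exact e_eq q sq p ζ (2*k+1) (2*k+2) _ _ _ hsqz hsq (hplq (2*k+2) (by omega))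
      (hWne (2*k+2) (by omega)).1 (hDop (2*k+2) (by omega))
      (hg1ne _ (by omega)) (hg1ne _ (by omega)) (hg2ne _ (by omega)) (hg2ne _ (by omega))
      (hg3ne _ (by omega)) (hg3ne _ (by omega))
  have TIM : Filter.Tendsto (fun N => ∏ k ∈ Finset.range N,
      (rrF q sq p ζ (2*k+1) * rrF q sq p ζ (2*k+2) * mnF q p sp ζ (2*k+2))⁻¹)
      Filter.atTop (nhds (phiF q p (ζ^2) * bMinuscE q p ζ)) := by
    rw [show phiF q p (ζ^2) * bMinuscE q p ζ =
        qpoch2 (p*ζ^2) (q^4) p * qpoch2 (p*q^4*ζ^2) (q^4) p * qpoch (p*q*ζ) p /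
        ((qpoch2 (p*q^2*ζ^2) (q^4) p)^2 * qpoch (p*q⁻¹*ζ) p) from by
      unfold phiF bMinuscE; ring]
    refine tendsto_OP_like _ (fun l => qpoch (p^l*ζ^2) (q^4))
      (fun l => qpoch (q^4*(p^l*ζ^2)) (q^4)) (fun l => qpoch (q^2*(p^l*ζ^2)) (q^4))
      (fun k => 1 - q*(sp^(2*k+2)*ζ)) (fun k => 1 - q⁻¹*(sp^(2*k+2)*ζ)) _ _ _ _ _
      (fun k => ?_) hL1 hL2 hL3 hTWim hTDim hL3ne hDimne
    exact e_eq q sq p ζ (2*k+1) (2*k+2) _ _ _ hsqz hsq (hmnq (2*k+2) (by omega))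
      (hWne (2*k+2) (by omega)).2 (hDom (2*k+2) (by omega))
      (hg1ne _ (by omega)) (hg1ne _ (by omega)) (hg2ne _ (by omega)) (hg2ne _ (by omega))
      (hg3ne _ (by omega)) (hg3ne _ (by omega))
  -- assemble
  have hQ := Qprod_eq q sq p sp ζ hrne (fun l hl => (hplmn l hl).1) (fun l hl => (hplmn l hl).2)
  rw [show Qprod q sq p sp ζ = fun N => Qm
      (∏ k ∈ Finset.range N,
        (rrF q sq p ζ (2*k+1) * rrF q sq p ζ (2*k+2) * plF q p sp ζ (2*k+1))⁻¹)
      (∏ k ∈ Finset.range N,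
        (rrF q sq p ζ (2*k+1) * rrF q sq p ζ (2*k+2) * mnF q p sp ζ (2*k+1))⁻¹)
      (∏ k ∈ Finset.range N,
        (rrF q sq p ζ (2*k+1) * rrF q sq p ζ (2*k+2) * plF q p sp ζ (2*k+2))⁻¹)
      (∏ k ∈ Finset.range N,
        (rrF q sq p ζ (2*k+1) * rrF q sq p ζ (2*k+2) * mnF q p sp ζ (2*k+2))⁻¹)
    from funext hQ]
  have hfin : phiF q p (ζ^2) • Emat q p sp ζ =
      Qm (phiF q p (ζ^2) * aPlusdE q p sp ζ) (phiF q p (ζ^2) * aMinusdE q p sp ζ)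
         (phiF q p (ζ^2) * bPluscE q p ζ) (phiF q p (ζ^2) * bMinuscE q p ζ) := by
    unfold Emat Qm aE dE bE cE
    ext i j
    fin_cases i <;> fin_cases j <;>
      simp [Matrix.vecHead, Matrix.vecTail] <;> ring
  rw [hfin]
  exact tendsto_Qm _ _ _ _ _ _ _ _ TOP TOM TIP TIM

end
end
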